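/- Let 1 ≤ p ≤ ∞. There exists a constant C > 0 such that for all t ≥ 0 and every measurable f : ℝ → ℂ with f ∈ L^p(ℝ) ∩ L^∞(ℝ), the function k ↦ e^{t·λ̂(k)} f(k) satisfies ‖k ↦ e^{t·λ̂(k)} f(k)‖_{L^p(ℝ)} ≤ C (1+t)^{−1/(2p)} (‖f‖_{L^p} + ‖f‖_{L^∞}), where the exponent 1/(2p) is interpreted as 0 when p = ∞. (Lemma 2.2.) -/

import Mathlib

open Real Complex MeasureTheory ENNReal

/-- Japanese bracket `⟨k⟩ = √(1+k²)`. -/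
noncomputable def jb (k : ℝ) : ℝ := Real.sqrt (1 + k ^ 2)

/-- The Fourier symbol `λ̂(k) = -d k² - i⟨k⟩`. -/
noncomputable def lamHat (d : ℝ) (k : ℝ) : ℂ := -(d * k ^ 2 : ℝ) - Complex.I * (jb k : ℝ)

lemma norm_exp_lamHat (d t k : ℝ) :
    ‖Complex.exp (t * lamHat d k)‖ = Real.exp (-(t * d) * k ^ 2) := by
  rw [Complex.norm_exp]
  congr 1
  simp [lamHat, Complex.mul_re, ← Complex.ofReal_pow]
  ring

/-- Lemma 2.2: for `1 ≤ p ≤ ∞` there is `C > 0` such that for all `t ≥ 0` and all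
`f ∈ L^p(ℝ) ∩ L^∞(ℝ)`,
`‖k ↦ e^{tλ̂(k)} f(k)‖_{L^p} ≤ C (1+t)^{-1/(2p)} (‖f‖_{L^p} + ‖f‖_{L^∞})`,
where `1/(2p)` is interpreted as `0` for `p = ∞`. -/
theorem linear_semigroup_bound (d : ℝ) (hd : 0 < d) (p : ℝ≥0∞) (hp : 1 ≤ p) :
    ∃ C : ℝ, 0 < C ∧ ∀ t : ℝ, 0 ≤ t → ∀ f : ℝ → ℂ, Measurable f →
      MemLp f p (volume : Measure ℝ) → MemLp f ⊤ (volume : Measure ℝ) →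
      eLpNorm (fun k => Complex.exp (t * lamHat d k) * f k) p (volume : Measure ℝ) ≤
        ENNReal.ofReal (C * (1 + t) ^ (-(1 / (2 * p.toReal)))) *
          (eLpNorm f p (volume : Measure ℝ) + eLpNorm f ⊤ (volume : Measure ℝ)) := by
  have hpi := Real.pi_pos
  refine ⟨2 * (Real.pi / d + 1), by positivity, ?_⟩
  set C := 2 * (Real.pi / d + 1) with hCdef
  have hC2 : (2 : ℝ) ≤ C := by
    have : 0 < Real.pi / d := by positivity
    nlinarith
  intro t ht f hf hfp hftop
  have hnorm : ∀ k, ‖Complex.exp (t * lamHat d k) * f k‖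
      = Real.exp (-(t * d) * k ^ 2) * ‖f k‖ := fun k => by
    rw [norm_mul, norm_exp_lamHat]
  have hexp_le : ∀ k : ℝ, Real.exp (-(t * d) * k ^ 2) ≤ 1 := fun k => by
    apply Real.exp_le_one_iff.mpr
    nlinarith [mul_nonneg (mul_nonneg ht hd.le) (sq_nonneg k)]
  by_cases hptop : p = ⊤
  · subst hptop
    simp only [ENNReal.toReal_top, mul_zero, _root_.div_zero, neg_zero, Real.rpow_zero, mul_one]
    have h1 : eLpNorm (fun k => Complex.exp (t * lamHat d k) * f k) ⊤ (volume : Measure ℝ)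
        ≤ eLpNorm f ⊤ (volume : Measure ℝ) := by
      apply eLpNorm_mono fun k => ?_
      rw [hnorm k]
      calc Real.exp (-(t * d) * k ^ 2) * ‖f k‖ ≤ 1 * ‖f k‖ :=
            mul_le_mul_of_nonneg_right (hexp_le k) (norm_nonneg _)
        _ = ‖f k‖ := one_mul _
    refine h1.trans ?_
    calc eLpNorm f ⊤ (volume : Measure ℝ) = 1 * eLpNorm f ⊤ (volume : Measure ℝ) :=
          (one_mul _).symm
      _ ≤ ENNReal.ofReal C * (eLpNorm f ⊤ (volume : Measure ℝ)
            + eLpNorm f ⊤ (volume : Measure ℝ)) :=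
          mul_le_mul' (ENNReal.one_le_ofReal.mpr (by linarith)) le_self_add
  · have hr1 : (1 : ℝ) ≤ p.toReal := by
      have h := ENNReal.toReal_mono hptop hp
      simpa using h
    set r := p.toReal with hrdef
    have hr0 : (0 : ℝ) < r := lt_of_lt_of_le one_pos hr1
    have hp0 : p ≠ 0 := by
      intro h; rw [h] at hp; exact absurd hp (by simp)
    set a := 1 / (2 * r) with hadef
    have ha0 : 0 < a := by positivity
    have ha1 : a ≤ 1 := by
      rw [hadef, div_le_one (by positivity)]; linarith
    rcases le_or_gt t 1 with ht1 | ht1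
    · -- small time: use the trivial bound
      have h1 : eLpNorm (fun k => Complex.exp (t * lamHat d k) * f k) p (volume : Measure ℝ)
          ≤ eLpNorm f p (volume : Measure ℝ) := by
        apply eLpNorm_mono fun k => ?_
        rw [hnorm k]
        calc Real.exp (-(t * d) * k ^ 2) * ‖f k‖ ≤ 1 * ‖f k‖ :=
              mul_le_mul_of_nonneg_right (hexp_le k) (norm_nonneg _)
          _ = ‖f k‖ := one_mul _
      have hCa : 1 ≤ C * (1 + t) ^ (-a) := by
        have h1t : (0 : ℝ) < 1 + t := by linarith
        have hx : (1 + t) ^ a ≤ C := by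
          calc (1 + t) ^ a ≤ (2 : ℝ) ^ a :=
                Real.rpow_le_rpow h1t.le (by linarith) ha0.le
            _ ≤ (2 : ℝ) ^ (1 : ℝ) := Real.rpow_le_rpow_of_exponent_le one_le_two ha1
            _ = 2 := Real.rpow_one 2
            _ ≤ C := hC2
        have hxpos : 0 < (1 + t) ^ a := Real.rpow_pos_of_pos h1t a
        rw [Real.rpow_neg h1t.le, ← div_eq_mul_inv]
        exact (one_le_div hxpos).mpr hx
      refine h1.trans ?_
      calc eLpNorm f p (volume : Measure ℝ) = 1 * eLpNorm f p (volume : Measure ℝ) :=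
            (one_mul _).symm
        _ ≤ ENNReal.ofReal (C * (1 + t) ^ (-a)) * (eLpNorm f p (volume : Measure ℝ)
              + eLpNorm f ⊤ (volume : Measure ℝ)) :=
            mul_le_mul' (ENNReal.one_le_ofReal.mpr hCa) le_self_add
    · -- large time: use the Gaussian decay
      have ht0 : (0 : ℝ) < t := lt_trans one_pos ht1
      set M := (eLpNorm f ⊤ (volume : Measure ℝ)).toReal with hMdef
      have hM0 : 0 ≤ M := ENNReal.toReal_nonneg
      have hMne : eLpNorm f ⊤ (volume : Measure ℝ) ≠ ⊤ := hftop.eLpNorm_ne_top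
      have hfM : ∀ᵐ k : ℝ ∂(volume : Measure ℝ), ‖f k‖ ≤ M := by
        filter_upwards [ae_le_eLpNormEssSup (f := f) (μ := (volume : Measure ℝ))] with k hk
        have hne : eLpNormEssSup f (volume : Measure ℝ) ≠ ⊤ := by
          rwa [eLpNorm_exponent_top] at hMne
        have h2 := ENNReal.toReal_mono hne hk
        rw [hMdef, eLpNorm_exponent_top]
        simpa using h2
      set g : ℝ → ℝ := fun k => Real.exp (-(t * d) * k ^ 2) * M with hgdef
      have hmono : eLpNorm (fun k => Complex.exp (t * lamHat d k) * f k) p (volume : Measure ℝ)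
          ≤ eLpNorm g p (volume : Measure ℝ) := by
        apply eLpNorm_mono_ae
        filter_upwards [hfM] with k hk
        rw [hnorm k, hgdef]
        have hg0 : 0 ≤ Real.exp (-(t * d) * k ^ 2) * M := by positivity
        rw [Real.norm_of_nonneg hg0]
        exact mul_le_mul_of_nonneg_left hk (Real.exp_pos _).le
      -- compute eLpNorm of g
      have hb : (0 : ℝ) < r * (t * d) := by positivity
      have hpt : ∀ k : ℝ, (‖g k‖ₑ) ^ r
          = ENNReal.ofReal (Real.exp (-(r * (t * d)) * k ^ 2)) * ENNReal.ofReal (M ^ r) := by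
        intro k
        have hg0 : 0 ≤ g k := by rw [hgdef]; positivity
        rw [Real.enorm_eq_ofReal hg0, ENNReal.ofReal_rpow_of_nonneg hg0 hr0.le]
        rw [← ENNReal.ofReal_mul (by positivity)]
        congr 1
        rw [hgdef]
        rw [Real.mul_rpow (Real.exp_pos _).le hM0, ← Real.exp_mul]
        congr 2
        ring
      have hlint : ∫⁻ k, (‖g k‖ₑ) ^ r ∂(volume : Measure ℝ)
          = ENNReal.ofReal (Real.sqrt (π / (r * (t * d))) * M ^ r) := by
        simp_rw [hpt]
        rw [lintegral_mul_const' _ _ ENNReal.ofReal_ne_top]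
        rw [← ofReal_integral_eq_lintegral_ofReal (integrable_exp_neg_mul_sq hb)
          (Filter.Eventually.of_forall fun x => (Real.exp_pos _).le)]
        rw [integral_gaussian, ← ENNReal.ofReal_mul (Real.sqrt_nonneg _)]
      have hcalc : eLpNorm g p (volume : Measure ℝ)
          = ENNReal.ofReal ((π / (r * (t * d))) ^ a * M) := by
        rw [eLpNorm_eq_lintegral_rpow_enorm_toReal hp0 hptop, ← hrdef, hlint]
        rw [ENNReal.ofReal_rpow_of_nonneg (by positivity) (by positivity)]
        congr 1
        rw [Real.mul_rpow (Real.sqrt_nonneg _) (by positivity)]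
        congr 1
        · rw [Real.sqrt_eq_rpow,
            ← Real.rpow_mul (by positivity : (0:ℝ) ≤ π / (r * (t * d)))]
          congr 1
          rw [hadef]; ring
        · rw [one_div, Real.rpow_rpow_inv hM0 hr0.ne']
      -- key real inequality
      have key : (π / (r * (t * d))) ^ a ≤ C * (1 + t) ^ (-a) := by
        have h1t : (0 : ℝ) < 1 + t := by linarith
        set y := π * (1 + t) / (r * (t * d)) with hydef
        have hy0 : 0 < y := by rw [hydef]; positivity
        have hsplit : π / (r * (t * d)) = y * (1 + t)⁻¹ := by
          rw [hydef]; field_simp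
        have hya : y ^ a ≤ C := by
          have hyle : y ≤ 2 * π / d := by
            rw [hydef, div_le_div_iff₀ hb (by positivity)]
            nlinarith [mul_nonneg (mul_nonneg (mul_nonneg hpi.le hd.le) ht0.le)
                (by linarith : (0:ℝ) ≤ r - 1),
              mul_nonneg (mul_nonneg hpi.le hd.le) (by linarith : (0:ℝ) ≤ t - 1)]
          rcases le_or_gt 1 y with h1y | h1y
          · calc y ^ a ≤ y ^ (1 : ℝ) := Real.rpow_le_rpow_of_exponent_le h1y ha1
              _ = y := Real.rpow_one y
              _ ≤ 2 * π / d := hyle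
              _ ≤ C := by rw [hCdef]; ring_nf; nlinarith
          · calc y ^ a ≤ 1 := Real.rpow_le_one hy0.le h1y.le ha0.le
              _ ≤ C := by linarith
        calc (π / (r * (t * d))) ^ a = y ^ a * ((1 + t)⁻¹) ^ a := by
              rw [hsplit, Real.mul_rpow hy0.le (by positivity)]
          _ = y ^ a * (1 + t) ^ (-a) := by
              rw [← Real.rpow_neg_one (1 + t), ← Real.rpow_mul h1t.le]
              ring_nf
          _ ≤ C * (1 + t) ^ (-a) :=
              mul_le_mul_of_nonneg_right hya (Real.rpow_nonneg h1t.le _)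
      refine hmono.trans ?_
      rw [hcalc]
      calc ENNReal.ofReal ((π / (r * (t * d))) ^ a * M)
          ≤ ENNReal.ofReal (C * (1 + t) ^ (-a) * M) :=
            ENNReal.ofReal_le_ofReal (mul_le_mul_of_nonneg_right key hM0)
        _ = ENNReal.ofReal (C * (1 + t) ^ (-a)) * ENNReal.ofReal M := by
            rw [ENNReal.ofReal_mul (by positivity)]
        _ = ENNReal.ofReal (C * (1 + t) ^ (-a)) * eLpNorm f ⊤ (volume : Measure ℝ) := by
            rw [hMdef, ENNReal.ofReal_toReal hMne]
        _ ≤ ENNReal.ofReal (C * (1 + t) ^ (-a)) * (eLpNorm f p (volume : Measure ℝ)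
              + eLpNorm f ⊤ (volume : Measure ℝ)) :=
            mul_le_mul' le_rfl le_add_self
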